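/- arXiv:0704.2919 — 2 statements merged into one kernel-verified Lean document; each statement's English description precedes it below -/
import Mathlib

section
/- Any minimal well-graded extension of a family B is a path extension of B. -/
open Finset

variable {α : Type*} [DecidableEq α]

/-- The span of a family `G`: all unions of nonempty subfamilies of `G`. -/
def Span (G : Finset (Finset α)) : Finset (Finset α) :=
  (G.powerset.filter Finset.Nonempty).image fun H => H.sup id

/-- A family is ∪-closed if it contains the union of each of its nonempty subfamilies. -/
def UnionClosed (F : Finset (Finset α)) : Prop :=
  ∀ H ⊆ F, H.Nonempty → H.sup id ∈ F

/-- `p` is a tight path from `P` to `Q` inside the family `F`. -/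
def IsTightPath (F : Finset (Finset α)) (P Q : Finset α) (p : List (Finset α)) : Prop :=
  p.head? = some P ∧ p.getLast? = some Q ∧
  p.length = (symmDiff P Q).card + 1 ∧
  (∀ S ∈ p, S ∈ F) ∧
  List.Chain' (fun A B => (symmDiff A B).card = 1) p

/-- A family is well-graded if any two distinct members are joined by a tight path. -/
def WellGraded (F : Finset (Finset α)) : Prop :=
  ∀ P ∈ F, ∀ Q ∈ F, P ≠ Q → ∃ p, IsTightPath F P Q p

/-- `B` is a base of `F`: a minimal subfamily of `F` spanning `F`. -/
def IsBase (B F : Finset (Finset α)) : Prop :=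
  B ⊆ F ∧ Span B = F ∧ ∀ H ⊆ B, Span H = F → H = B

/-- `A` is an atom of `F` at `x`: an inclusion-minimal member of `F` containing `x`. -/
def IsAtomAt (F : Finset (Finset α)) (x : α) (A : Finset α) : Prop :=
  A ∈ F ∧ x ∈ A ∧ ∀ B ∈ F, x ∈ B → B ⊆ A → B = A

/-- `A` is an atom of `F`: either the empty set (if it is in `F`) or an atom at some point. -/
def IsAtomOf (F : Finset (Finset α)) (A : Finset α) : Prop :=
  (A = ∅ ∧ A ∈ F) ∨ ∃ x, IsAtomAt F x A

/-- The surmise function: the collection of atoms of `F` at `x`. -/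
def surmise (F : Finset (Finset α)) (x : α) : Finset (Finset α) :=
  F.filter fun A => x ∈ A ∧ ∀ B ∈ F, x ∈ B → B ⊆ A → B = A

/-- `{σ(x) : x ∈ ∪F}` forms a partition of `B \ {∅}`. -/
def SurmisePartition (F B : Finset (Finset α)) : Prop :=
  (∀ x ∈ F.sup id, ∀ y ∈ F.sup id,
      surmise F x = surmise F y ∨ Disjoint (surmise F x) (surmise F y)) ∧
  (F.sup id).sup (surmise F) = B.erase ∅

/-- The endpoints of `X` in the family `B`: elements of `X` lying in no proper
subset of `X` belonging to `B`. -/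
def endpoints (B : Finset (Finset α)) (X : Finset α) : Finset α :=
  X \ (B.filter fun Y => Y ⊂ X).sup id

/-- A family is discriminative if points contained in the same members are equal. -/
def Discriminative (F : Finset (Finset α)) : Prop :=
  ∀ u ∈ F.sup id, ∀ v ∈ F.sup id, (∀ S ∈ F, (u ∈ S ↔ v ∈ S)) → u = v

lemma sd_of_subset {P Q : Finset α} (h : P ⊆ Q) : symmDiff P Q = Q \ P := by
  ext x
  simp only [Finset.mem_symmDiff, Finset.mem_sdiff]
  constructor
  · rintro (⟨h1, h2⟩ | h1)
    · exact absurd (h h1) h2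
    · exact h1
  · exact fun h1 => Or.inr h1

lemma sd_card_triangle' (X B Y : Finset α) :
    (symmDiff X Y).card ≤ (symmDiff X B).card + (symmDiff B Y).card :=
  le_trans (Finset.card_le_card (symmDiff_triangle X B Y)) (Finset.card_union_le _ _)

lemma chain_length_lb' : ∀ (p : List (Finset α)) (X Y : Finset α),
    List.Chain' (fun A B => (symmDiff A B).card = 1) p →
    p.head? = some X → p.getLast? = some Y →
    (symmDiff X Y).card + 1 ≤ p.length := by
  intro p
  induction p with
  | nil => intro X Y _ h; simp at h
  | cons A rest ih =>
    intro X Y hc hh hl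
    simp only [List.head?_cons, Option.some.injEq] at hh
    subst hh
    cases rest with
    | nil =>
      have : A = Y := by simpa using hl
      subst this
      simp [symmDiff_self]
    | cons C rest' =>
      rw [List.getLast?_cons_cons] at hl
      simp only [List.Chain', List.isChain_cons_cons] at hc
      have h1 := ih C Y hc.2 rfl hl
      have h2 := sd_card_triangle' A C Y
      have h3 := hc.1
      simp only [List.length_cons] at *
      omega

lemma tight_path_structure : ∀ (p : List (Finset α)) (X Y : Finset α), X ⊆ Y →
    p.head? = some X → p.getLast? = some Y →
    p.length = (symmDiff X Y).card + 1 →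
    List.Chain' (fun A B => (symmDiff A B).card = 1) p →
    (List.Chain' (fun A B => ∃ x, x ∉ A ∧ B = insert x A) p ∧ ∀ S ∈ p, X ⊆ S ∧ S ⊆ Y) := by
  intro p
  induction p with
  | nil => intro X Y _ h; simp at h
  | cons A rest ih =>
    intro X Y hXY hh hl hlen hc
    simp only [List.head?_cons, Option.some.injEq] at hh
    subst hh
    cases rest with
    | nil =>
      have hAY : A = Y := by simpa using hl
      refine ⟨List.isChain_singleton A, ?_⟩
      intro S hS
      simp only [List.mem_singleton] at hS
      subst hS
      exact ⟨Finset.Subset.refl _, hXY⟩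
    | cons C rest' =>
      rw [List.getLast?_cons_cons] at hl
      simp only [List.Chain', List.isChain_cons_cons] at hc
      obtain ⟨x, hx⟩ := Finset.card_eq_one.1 hc.1
      have hmemx : ∀ y, y ∈ symmDiff A C ↔ y = x := by
        intro y; rw [hx, Finset.mem_singleton]
      have hlb := chain_length_lb' (C::rest') C Y hc.2 rfl hl
      simp only [List.length_cons] at hlen hlb
      have hdec : (symmDiff C Y).card + 1 ≤ (symmDiff A Y).card := by omega
      have hxAC : x ∈ symmDiff A C := by rw [hmemx]
      -- good case analysis
      have hgood : x ∉ A ∧ x ∈ Y := by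
        by_contra hbad
        have key : x ∈ symmDiff C Y ∧ x ∉ symmDiff A Y := by
          rw [Finset.mem_symmDiff] at hxAC
          simp only [Finset.mem_symmDiff]
          rcases hxAC with ⟨hxA, hxC⟩ | ⟨hxC, hxA⟩
          · have hxY : x ∈ Y := hXY hxA
            exact ⟨Or.inr ⟨hxY, hxC⟩, by tauto⟩
          · have hxY : x ∉ Y := by tauto
            exact ⟨Or.inl ⟨hxC, hxY⟩, by tauto⟩
        have hsub : insert x (symmDiff A Y) ⊆ symmDiff C Y := by
          intro y hy
          rcases Finset.mem_insert.1 hy with rfl | hy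
          · exact key.1
          · have hyx : y ≠ x := fun h => key.2 (h ▸ hy)
            have : y ∉ symmDiff A C := fun h => hyx ((hmemx y).1 h)
            rw [Finset.mem_symmDiff] at hy this ⊢
            tauto
        have := Finset.card_le_card hsub
        rw [Finset.card_insert_of_notMem key.2] at this
        omega
      obtain ⟨hxA, hxY⟩ := hgood
      have hxC : x ∈ C := by
        rw [Finset.mem_symmDiff] at hxAC; tauto
      have hCA : C = insert x A := by
        ext y
        rcases eq_or_ne y x with rfl | hyx
        · simp [hxC]
        · have : y ∉ symmDiff A C := fun h => hyx ((hmemx y).1 h)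
          rw [Finset.mem_symmDiff] at this
          simp only [Finset.mem_insert]
          constructor
          · intro h; right; tauto
          · rintro (rfl | h)
            · exact hxC
            · tauto
      have hCY : C ⊆ Y := by rw [hCA]; exact Finset.insert_subset hxY hXY
      have hsdC : symmDiff C Y = (symmDiff A Y).erase x := by
        rw [sd_of_subset hCY, sd_of_subset hXY, hCA]
        ext y
        simp only [Finset.mem_sdiff, Finset.mem_erase, Finset.mem_insert]
        tauto
      have hxAY : x ∈ symmDiff A Y := by
        rw [Finset.mem_symmDiff]; exact Or.inr ⟨hxY, hxA⟩
      have hcard : (symmDiff C Y).card + 1 = (symmDiff A Y).card := by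
        rw [hsdC]; exact Finset.card_erase_add_one hxAY
      have ihres := ih C Y hCY rfl hl (by simp only [List.length_cons]; omega) hc.2
      constructor
      · simp only [List.Chain', List.isChain_cons_cons]
        exact ⟨⟨x, hxA, hCA⟩, ihres.1⟩
      · intro S hS
        rcases List.mem_cons.1 hS with rfl | hS
        · exact ⟨Finset.Subset.refl _, hXY⟩
        · obtain ⟨h1, h2⟩ := ihres.2 S hS
          exact ⟨Finset.Subset.trans (hCA ▸ Finset.subset_insert x A) h1, h2⟩


lemma sd_card_split (P Q : Finset α) : (symmDiff P Q).card = (P \ Q).card + (Q \ P).card := by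
  have : symmDiff P Q = (P \ Q) ∪ (Q \ P) := by
    ext x; simp [Finset.mem_symmDiff]
  rw [this]
  exact Finset.card_union_of_disjoint (Finset.disjoint_left.2 (by intro a ha hb; simp at ha hb; tauto))

lemma sd_insert {P : Finset α} {x : α} (hx : x ∉ P) : symmDiff P (insert x P) = {x} := by
  ext y
  simp only [Finset.mem_symmDiff, Finset.mem_insert, Finset.mem_singleton]
  constructor
  · rintro (⟨h1, h2⟩ | ⟨h1, h2⟩)
    · exact absurd (Or.inr h1) h2
    · tauto
  · rintro rfl; exact Or.inr ⟨Or.inl rfl, hx⟩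

lemma chain_head_subset : ∀ (p : List (Finset α)) (K : Finset α),
    List.Chain' (fun A B : Finset α => A ⊆ B) p → p.head? = some K → ∀ S ∈ p, K ⊆ S := by
  intro p
  induction p with
  | nil => intro K _ _ S hS; simp at hS
  | cons A rest ih =>
    intro K hc hh S hS
    simp only [List.head?_cons, Option.some.injEq] at hh
    subst hh
    rcases List.mem_cons.1 hS with rfl | hS
    · exact Finset.Subset.refl _
    · cases rest with
      | nil => simp at hS
      | cons C rest' =>
        simp only [List.Chain', List.isChain_cons_cons] at hc
        exact Finset.Subset.trans hc.1 (ih C hc.2 rfl S hS)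

lemma find_step : ∀ (p : List (Finset α)) (P K : Finset α),
    List.Chain' (fun A B => ∃ x, x ∉ A ∧ B = insert x A) p →
    p.head? = some K → K ⊆ P → ∀ S ∈ p, ¬ S ⊆ P →
    ∃ A x, A ⊆ P ∧ x ∉ P ∧ x ∈ S ∧ insert x A ∈ p := by
  intro p
  induction p with
  | nil => intro P K _ _ _ S hS; simp at hS
  | cons A rest ih =>
    intro P K hc hh hKP S hS hSP
    simp only [List.head?_cons, Option.some.injEq] at hh
    subst hh
    rcases List.mem_cons.1 hS with rfl | hS
    · exact absurd hKP hSP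
    · cases rest with
      | nil => simp at hS
      | cons C rest' =>
        simp only [List.Chain', List.isChain_cons_cons] at hc
        obtain ⟨x, hxA, hCx⟩ := hc.1
        by_cases hxP : x ∈ P
        · have hCP : C ⊆ P := by
            rw [hCx]; exact Finset.insert_subset hxP hKP
          obtain ⟨A', x', h1, h2, h3, h4⟩ := ih P C hc.2 rfl hCP S hS hSP
          exact ⟨A', x', h1, h2, h3, List.mem_cons_of_mem _ h4⟩
        · have hsubC : C ⊆ S := by
            apply chain_head_subset (C :: rest') C _ rfl S hS
            exact List.IsChain.imp (by rintro a b ⟨y, _, rfl⟩; exact Finset.subset_insert y a) hc.2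
          refine ⟨A, x, hKP, hxP, hsubC (hCx ▸ Finset.mem_insert_self x A), ?_⟩
          rw [← hCx]
          exact List.mem_cons_of_mem _ List.mem_cons_self

lemma mem_Span {G : Finset (Finset α)} {S : Finset α} :
    S ∈ Span G ↔ ∃ H, H ⊆ G ∧ H.Nonempty ∧ H.sup id = S := by
  simp only [Span, Finset.mem_image, Finset.mem_filter, Finset.mem_powerset]
  constructor
  · rintro ⟨H, ⟨h1, h2⟩, h3⟩; exact ⟨H, h1, h2, h3⟩
  · rintro ⟨H, h1, h2, h3⟩; exact ⟨H, ⟨h1, h2⟩, h3⟩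

lemma subset_Span {G : Finset (Finset α)} : G ⊆ Span G := by
  intro S hS
  exact mem_Span.2 ⟨{S}, Finset.singleton_subset_iff.2 hS, Finset.singleton_nonempty S,
    Finset.sup_singleton⟩

lemma span_sup_filter {G : Finset (Finset α)} {S : Finset α} (h : S ∈ Span G) :
    (G.filter (· ⊆ S)).Nonempty ∧ (G.filter (· ⊆ S)).sup id = S := by
  obtain ⟨H, hHG, hne, hsup⟩ := mem_Span.1 h
  have hsubf : H ⊆ G.filter (· ⊆ S) := by
    intro T hT
    rw [Finset.mem_filter]
    exact ⟨hHG hT, hsup ▸ Finset.le_sup (f := id) hT⟩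
  constructor
  · exact hne.mono hsubf
  · apply le_antisymm
    · exact Finset.sup_le fun T hT => (Finset.mem_filter.1 hT).2
    · conv_lhs => rw [← hsup]
      exact Finset.sup_le fun T hT => Finset.le_sup (hsubf hT)

lemma unionClosed_Span (G : Finset (Finset α)) : UnionClosed (Span G) := by
  intro H hH hne
  obtain ⟨S₀, hS₀⟩ := hne
  obtain ⟨hne₀, hsup₀⟩ := span_sup_filter (hH hS₀)
  apply mem_Span.2
  refine ⟨G.filter (· ⊆ H.sup id), Finset.filter_subset _ _, ?_, ?_⟩
  · obtain ⟨T, hT⟩ := hne₀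
    rw [Finset.mem_filter] at hT
    exact ⟨T, Finset.mem_filter.2 ⟨hT.1, hT.2.trans (Finset.le_sup (f := id) hS₀)⟩⟩
  · apply le_antisymm
    · exact Finset.sup_le fun T hT => (Finset.mem_filter.1 hT).2
    · apply Finset.sup_le
      intro S hS
      obtain ⟨_, hsupS⟩ := span_sup_filter (hH hS)
      calc id S = (G.filter (· ⊆ S)).sup id := hsupS.symm
        _ ≤ (G.filter (· ⊆ H.sup id)).sup id := by
            apply Finset.sup_le
            intro T hT
            rw [Finset.mem_filter] at hT
            exact Finset.le_sup (Finset.mem_filter.2 ⟨hT.1, hT.2.trans (Finset.le_sup (f := id) hS)⟩)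

lemma Span_subset {G F : Finset (Finset α)} (hGF : G ⊆ F) (hF : UnionClosed F) :
    Span G ⊆ F := by
  intro S hS
  obtain ⟨H, h1, h2, h3⟩ := mem_Span.1 hS
  exact h3 ▸ hF H (h1.trans hGF) h2

lemma tight_single (G : Finset (Finset α)) (P : Finset α) (hP : P ∈ G) :
    IsTightPath G P P [P] := by
  refine ⟨rfl, rfl, ?_, ?_, List.isChain_singleton P⟩
  · simp [symmDiff_self]
  · intro S hS; simp only [List.mem_singleton] at hS; subst hS; exact hP

lemma build_path (G : Finset (Finset α))
    (hU : ∀ P ∈ G, ∀ T ∈ G, P ∪ T ∈ G)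
    (haug : ∀ P ∈ G, ∀ Q ∈ G, ¬ Q ⊆ P → ∃ x, x ∈ Q \ P ∧ insert x P ∈ G) :
    ∀ (n : ℕ) (P Q : Finset α), P ∈ G → Q ∈ G → (Q \ P).card = n →
    ∃ p, IsTightPath G P (P ∪ Q) p := by
  intro n
  induction n with
  | zero =>
    intro P Q hP hQ hcard
    have hQP : Q ⊆ P := by
      rw [← Finset.sdiff_eq_empty_iff_subset]
      exact Finset.card_eq_zero.1 hcard
    have : P ∪ Q = P := Finset.union_eq_left.2 hQP
    rw [this]
    exact ⟨[P], tight_single G P hP⟩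
  | succ n ih =>
    intro P Q hP hQ hcard
    have hnQP : ¬ Q ⊆ P := by
      intro h
      rw [Finset.sdiff_eq_empty_iff_subset.2 h] at hcard
      simp at hcard
    obtain ⟨x, hxQP, hPx⟩ := haug P hP Q hQ hnQP
    rw [Finset.mem_sdiff] at hxQP
    have hcard' : (Q \ insert x P).card = n := by
      have : Q \ insert x P = (Q \ P).erase x := by
        ext y
        simp only [Finset.mem_sdiff, Finset.mem_erase, Finset.mem_insert]
        tauto
      rw [this]
      have := Finset.card_erase_add_one (Finset.mem_sdiff.2 hxQP)
      omega
    obtain ⟨p', hp'⟩ := ih (insert x P) Q hPx hQ hcard'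
    have hunion : insert x P ∪ Q = P ∪ Q := by
      ext y
      simp only [Finset.mem_union, Finset.mem_insert]
      constructor
      · rintro (( rfl | h) | h) <;> tauto
      · tauto
    rw [hunion] at hp'
    obtain ⟨h1, h2, h3, h4, h5⟩ := hp'
    cases p' with
    | nil => simp at h1
    | cons b t =>
      simp only [List.head?_cons, Option.some.injEq] at h1
      subst h1
      refine ⟨P :: insert x P :: t, rfl, ?_, ?_, ?_, ?_⟩
      · rw [List.getLast?_cons_cons]; exact h2
      · have e1 : symmDiff P (P ∪ Q) = Q \ P := by
          rw [sd_of_subset Finset.subset_union_left]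
          ext y; simp only [Finset.mem_sdiff, Finset.mem_union]; tauto
        have e2 : symmDiff (insert x P) (P ∪ Q) = Q \ insert x P := by
          rw [sd_of_subset]
          · ext y
            simp only [Finset.mem_sdiff, Finset.mem_union, Finset.mem_insert]
            tauto
          · exact Finset.insert_subset (Finset.mem_union_right _ hxQP.1) Finset.subset_union_left
        rw [e1, hcard]
        simp only [List.length_cons] at h3 ⊢
        rw [e2, hcard'] at h3
        omega
      · intro S hS
        rcases List.mem_cons.1 hS with rfl | hS
        · exact hP
        · exact h4 S hS
      · simp only [List.Chain', List.isChain_cons_cons]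
        refine ⟨?_, h5⟩
        rw [sd_insert hxQP.2]
        exact Finset.card_singleton x

lemma glue_path (G : Finset (Finset α)) (P Q : Finset α) (p q : List (Finset α))
    (hp : IsTightPath G P (P ∪ Q) p) (hq : IsTightPath G Q (P ∪ Q) q) :
    ∃ r, IsTightPath G P Q r := by
  obtain ⟨hp1, hp2, hp3, hp4, hp5⟩ := hp
  obtain ⟨hq1, hq2, hq3, hq4, hq5⟩ := hq
  have hqrev : q.reverse.head? = some (P ∪ Q) := by rw [List.head?_reverse]; exact hq2
  have hqrevlast : q.reverse.getLast? = some Q := by rw [List.getLast?_reverse]; exact hq1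
  have hqrevchain : List.Chain' (fun A B => (symmDiff A B).card = 1) q.reverse := by
    simp only [List.Chain', List.isChain_reverse]
    exact List.IsChain.imp (fun a b h => by rwa [symmDiff_comm] at h) hq5
  cases hrev : q.reverse with
  | nil => rw [hrev] at hqrev; simp at hqrev
  | cons c t =>
    rw [hrev] at hqrev hqrevlast hqrevchain
    simp only [List.head?_cons, Option.some.injEq] at hqrev
    subst hqrev
    cases t with
    | nil =>
      -- q = [P ∪ Q], so Q = P ∪ Q
      have hq' : q = [P ∪ Q] := by
        have := congrArg List.reverse hrev
        simpa using this
      rw [hq'] at hq1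
      simp only [List.head?_cons, Option.some.injEq] at hq1
      refine ⟨p, hp1, ?_, ?_, hp4, hp5⟩
      · rw [hp2, hq1]
      · rw [hp3, hq1]
    | cons d t' =>
      refine ⟨p ++ (d :: t'), ?_, ?_, ?_, ?_, ?_⟩
      · cases p with
        | nil => simp at hp1
        | cons a p₁ =>
          simp only [List.head?_cons, Option.some.injEq] at hp1
          subst hp1
          rfl
      · rw [List.getLast?_append_of_ne_nil p (by simp)]
        rw [List.getLast?_cons_cons] at hqrevlast
        exact hqrevlast
      · have e1 : symmDiff P (P ∪ Q) = Q \ P := by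
          rw [sd_of_subset Finset.subset_union_left]
          ext y; simp only [Finset.mem_sdiff, Finset.mem_union]; tauto
        have e2 : symmDiff Q (P ∪ Q) = P \ Q := by
          rw [sd_of_subset Finset.subset_union_right]
          ext y; simp only [Finset.mem_sdiff, Finset.mem_union]; tauto
        have hlq : q.length = (d :: t').length + 1 := by
          rw [← List.length_reverse, hrev]
          simp
        rw [List.length_append, hp3, e1, sd_card_split]
        rw [e2] at hq3
        simp only [List.length_cons] at hlq hq3 ⊢
        omega
      · intro S hS
        rcases List.mem_append.1 hS with hS | hS
        · exact hp4 S hS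
        · apply hq4
          rw [← List.mem_reverse, hrev]
          exact List.mem_cons_of_mem _ hS
      · simp only [List.Chain', List.isChain_append]
        refine ⟨hp5, hqrevchain.tail, ?_⟩
        intro x hx y hy
        rw [hp2] at hx
        simp only [Option.mem_def, Option.some.injEq] at hx
        subst hx
        simp only [List.Chain', List.isChain_cons_cons] at hqrevchain
        have := hqrevchain.1
        simp only [List.head?_cons, Option.mem_def, Option.some.injEq] at hy
        subst hy
        rwa [symmDiff_comm] at this ⊢

/-- Any minimal well-graded extension is a path extension. -/
theorem minimal_wg_extension_is_path_extension (B F : Finset (Finset α))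
    (hBF : B ⊆ F) (hF : UnionClosed F) (hwg : WellGraded F)
    (hmin : ∀ F' : Finset (Finset α),
      UnionClosed F' → B ⊆ F' → F' ⊂ F → ¬ WellGraded F') :
    ∃ π : Finset α → Finset α → List (Finset α),
      (∀ K ∈ B, ∀ L ∈ B, IsTightPath ((B.sup id).powerset) K (K ∪ L) (π K L)) ∧
      ∃ B' : Finset (Finset α),
        (∀ S : Finset α, S ∈ B' ↔ ∃ K ∈ B, ∃ L ∈ B, S ∈ π K L) ∧
        Span B' = F := by
  classical
  have hex : ∀ K L : Finset α, ∃ p : List (Finset α),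
      K ∈ B → L ∈ B → IsTightPath F K (K ∪ L) p := by
    intro K L
    by_cases hK : K ∈ B
    · by_cases hL : L ∈ B
      · have hKF : K ∈ F := hBF hK
        have hKL : K ∪ L ∈ F := by
          have h2 : ({K, L} : Finset (Finset α)) ⊆ F := by
            intro S hS
            rcases Finset.mem_insert.1 hS with rfl | hS
            · exact hKF
            · rw [Finset.mem_singleton] at hS; subst hS; exact hBF hL
          have := hF {K, L} h2 ⟨K, Finset.mem_insert_self _ _⟩
          simpa [Finset.sup_insert, Finset.sup_singleton, Finset.sup_eq_union] using this
        by_cases heq : K = K ∪ L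
        · exact ⟨[K], fun _ _ => by rw [← heq]; exact tight_single F K hKF⟩
        · obtain ⟨p, hp⟩ := hwg K hKF (K ∪ L) hKL heq
          exact ⟨p, fun _ _ => hp⟩
      · exact ⟨[], fun _ h => absurd h hL⟩
    · exact ⟨[], fun h _ => absurd h hK⟩
  choose π hπ using hex
  have hstruct : ∀ K ∈ B, ∀ L ∈ B,
      List.Chain' (fun A C => ∃ x, x ∉ A ∧ C = insert x A) (π K L) ∧
      ∀ S ∈ π K L, K ⊆ S ∧ S ⊆ K ∪ L := by
    intro K hK L hL
    obtain ⟨h1, h2, h3, _, h5⟩ := hπ K L hK hL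
    exact tight_path_structure (π K L) K (K ∪ L) Finset.subset_union_left h1 h2 h3 h5
  set B' : Finset (Finset α) := (B ×ˢ B).biUnion (fun KL => (π KL.1 KL.2).toFinset) with hB'
  have hB'mem : ∀ S : Finset α, S ∈ B' ↔ ∃ K ∈ B, ∃ L ∈ B, S ∈ π K L := by
    intro S
    simp only [hB', Finset.mem_biUnion, Finset.mem_product, List.mem_toFinset]
    constructor
    · rintro ⟨⟨K, L⟩, ⟨hK, hL⟩, hS⟩
      exact ⟨K, hK, L, hL, hS⟩
    · rintro ⟨K, hK, L, hL, hS⟩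
      exact ⟨(K, L), ⟨hK, hL⟩, hS⟩
  have hB'F : B' ⊆ F := by
    intro S hS
    obtain ⟨K, hK, L, hL, hS⟩ := (hB'mem S).1 hS
    exact (hπ K L hK hL).2.2.2.1 S hS
  have hBB' : B ⊆ B' := by
    intro K hK
    apply (hB'mem K).2
    refine ⟨K, hK, K, hK, ?_⟩
    exact List.mem_of_mem_head? (show K ∈ (π K K).head? from by
      rw [(hπ K K hK hK).1]; rfl)
  set G : Finset (Finset α) := Span B' with hG
  have hGF : G ⊆ F := Span_subset hB'F hF
  have hBG : B ⊆ G := fun K hK => subset_Span (hBB' hK)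
  have hUC : UnionClosed G := unionClosed_Span B'
  have hpairU : ∀ P ∈ G, ∀ T ∈ G, P ∪ T ∈ G := by
    intro P hP T hT
    have h2 : ({P, T} : Finset (Finset α)) ⊆ G := by
      intro S hS
      rcases Finset.mem_insert.1 hS with rfl | hS
      · exact hP
      · rw [Finset.mem_singleton] at hS; subst hS; exact hT
    have := hUC {P, T} h2 ⟨P, Finset.mem_insert_self _ _⟩
    simpa [Finset.sup_insert, Finset.sup_singleton, Finset.sup_eq_union] using this
  have hcontains_base : ∀ P ∈ G, ∃ K₀ ∈ B, K₀ ⊆ P := by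
    intro P hP
    obtain ⟨H, hHB', hne, hsup⟩ := mem_Span.1 hP
    obtain ⟨S₀, hS₀⟩ := hne
    obtain ⟨K₀, hK₀, L₀, hL₀, hS₀mem⟩ := (hB'mem S₀).1 (hHB' hS₀)
    refine ⟨K₀, hK₀, ?_⟩
    have h1 : K₀ ⊆ S₀ := ((hstruct K₀ hK₀ L₀ hL₀).2 S₀ hS₀mem).1
    exact h1.trans (hsup ▸ Finset.le_sup (f := id) hS₀)
  have haug : ∀ P ∈ G, ∀ Q ∈ G, ¬ Q ⊆ P → ∃ x, x ∈ Q \ P ∧ insert x P ∈ G := by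
    intro P hP Q hQ hQP
    obtain ⟨K₀, hK₀, hK₀P⟩ := hcontains_base P hP
    obtain ⟨HQ, hHQB', hQne, hQsup⟩ := mem_Span.1 hQ
    have hex2 : ∃ S ∈ HQ, ¬ S ⊆ P := by
      by_contra h
      push_neg at h
      exact hQP (hQsup ▸ Finset.sup_le fun T hT => h T hT)
    obtain ⟨S, hSH, hSP⟩ := hex2
    have hSQ : S ⊆ Q := hQsup ▸ Finset.le_sup (f := id) hSH
    obtain ⟨K, hK, L, hL, hSπ⟩ := (hB'mem S).1 (hHQB' hSH)
    have hKS : K ⊆ S := ((hstruct K hK L hL).2 S hSπ).1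
    have key : ∀ A x, A ⊆ P → (insert x A) ∈ B' → insert x P ∈ G := by
      intro A x hAP hmem
      have heq : insert x P = P ∪ insert x A := by
        ext y
        simp only [Finset.mem_insert, Finset.mem_union]
        constructor
        · rintro (rfl | h) <;> tauto
        · rintro (h | rfl | h)
          · tauto
          · tauto
          · exact Or.inr (hAP h)
      rw [heq]
      exact hpairU P hP _ (subset_Span hmem)
    by_cases hKP : K ⊆ P
    · obtain ⟨A, x, h1, h2, h3, h4⟩ := find_step (π K L) P K (hstruct K hK L hL).1
        (hπ K L hK hL).1 hKP S hSπ hSP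
      exact ⟨x, Finset.mem_sdiff.2 ⟨hSQ h3, h2⟩, key A x h1 ((hB'mem _).2 ⟨K, hK, L, hL, h4⟩)⟩
    · have hlast : K₀ ∪ K ∈ π K₀ K :=
        List.mem_of_mem_getLast? (show K₀ ∪ K ∈ (π K₀ K).getLast? from by
          rw [(hπ K₀ K hK₀ hK).2.1]; rfl)
      have hnsub : ¬ (K₀ ∪ K) ⊆ P := fun h => hKP (Finset.union_subset_iff.1 h).2
      obtain ⟨A, x, h1, h2, h3, h4⟩ := find_step (π K₀ K) P K₀ (hstruct K₀ hK₀ K hK).1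
        (hπ K₀ K hK₀ hK).1 hK₀P (K₀ ∪ K) hlast hnsub
      have hxK : x ∈ K := by
        rcases Finset.mem_union.1 h3 with h | h
        · exact absurd (hK₀P h) h2
        · exact h
      exact ⟨x, Finset.mem_sdiff.2 ⟨hSQ (hKS hxK), h2⟩,
        key A x h1 ((hB'mem _).2 ⟨K₀, hK₀, K, hK, h4⟩)⟩
  have hWG : WellGraded G := by
    intro P hP Q hQ hne
    obtain ⟨p, hp⟩ := build_path G hpairU haug (Q \ P).card P Q hP hQ rfl
    obtain ⟨q, hq⟩ := build_path G hpairU haug (P \ Q).card Q P hQ hP rfl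
    rw [Finset.union_comm] at hq
    exact glue_path G P Q p q hp hq
  have hGeqF : G = F := by
    by_contra hneq
    exact hmin G hUC hBG (Finset.ssubset_iff_subset_ne.2 ⟨hGF, hneq⟩) hWG
  refine ⟨π, ?_, B', hB'mem, hGeqF⟩
  intro K hK L hL
  obtain ⟨h1, h2, h3, _, h5⟩ := hπ K L hK hL
  refine ⟨h1, h2, h3, ?_, h5⟩
  intro S hS
  rw [Finset.mem_powerset]
  have hSKL : S ⊆ K ∪ L := ((hstruct K hK L hL).2 S hS).2
  exact hSKL.trans (Finset.union_subset (Finset.le_sup (f := id) hK) (Finset.le_sup (f := id) hL))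
end

section
/- If F is a ∪-closed well-graded family and X, Y ∈ F are distinct, then there exists a tight path from X to X ∪ Y in F consisting of an increasing chain: a sequence X = X_1 ⊊ X_2 ⊊ ... ⊊ X_n = X ∪ Y in F with |X_{i+1} \ X_i| = 1 for each i. -/
open Finset

variable {α : Type*} [DecidableEq α]

lemma card_symmDiff_triangle (A B C : Finset α) :
    (symmDiff A C).card ≤ (symmDiff A B).card + (symmDiff B C).card :=
  le_trans (card_le_card (symmDiff_triangle A B C)) (card_union_le _ _)

lemma symmDiff_singleton_not_mem (A : Finset α) (a : α) (h : a ∉ A) :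
    symmDiff A {a} = insert a A := by
  rw [symmDiff_def]; ext x; by_cases hx : x = a <;> simp [hx, h]

lemma symmDiff_singleton_mem (A : Finset α) (a : α) (h : a ∈ A) :
    symmDiff A {a} = A.erase a := by
  rw [symmDiff_def]; ext x; by_cases hx : x = a <;> simp [hx, h]

lemma symmDiff_of_subset' {A B : Finset α} (h : A ⊆ B) : symmDiff A B = B \ A := by
  rw [symmDiff_def]; simp [Finset.sdiff_eq_empty_iff_subset.2 h]

lemma chain_dist_le : ∀ (p : List (Finset α)) (A B : Finset α),
    List.Chain' (fun S T => (symmDiff S T).card = 1) p →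
    p.head? = some A → p.getLast? = some B →
    (symmDiff A B).card + 1 ≤ p.length := by
  intro p
  induction p with
  | nil => intro A B _ h; simp at h
  | cons C tail IH =>
    intro A B hchain hhead hlast
    obtain rfl : A = C := by symm; simpa using hhead
    cases tail with
    | nil =>
      obtain rfl : A = B := by simpa using hlast
      simp
    | cons D rest =>
      simp only [List.Chain', List.isChain_cons_cons] at hchain
      have h1 : (symmDiff A D).card = 1 := hchain.1
      have hlast' : (D :: rest).getLast? = some B := by
        rw [← hlast, List.getLast?_cons_cons]
      have hIH := IH D B hchain.2 rfl hlast'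
      have htri := card_symmDiff_triangle A D B
      simp only [List.length_cons] at hIH ⊢
      omega

lemma tight_chain_increasing : ∀ (p : List (Finset α)) (A B : Finset α), A ⊆ B →
    List.Chain' (fun S T => (symmDiff S T).card = 1) p →
    p.head? = some A → p.getLast? = some B →
    p.length = (symmDiff A B).card + 1 →
    List.Chain' (fun S T => S ⊂ T ∧ (T \ S).card = 1) p := by
  intro p
  induction p with
  | nil => intro A B _ _ h; simp at h
  | cons C tail IH =>
    intro A B hAB hchain hhead hlast hlen
    obtain rfl : A = C := by symm; simpa using hhead
    cases tail with
    | nil => simp [List.Chain']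
    | cons D rest =>
      simp only [List.Chain', List.isChain_cons_cons] at hchain
      have h1 : (symmDiff A D).card = 1 := hchain.1
      have hlast' : (D :: rest).getLast? = some B := by
        rw [← hlast, List.getLast?_cons_cons]
      -- D = symmDiff A {a} for some a
      obtain ⟨a, ha⟩ := Finset.card_eq_one.1 h1
      have hD : D = symmDiff A {a} := by
        rw [← ha, symmDiff_symmDiff_cancel_left]
      have hDB : symmDiff D B = symmDiff (symmDiff A B) {a} := by
        rw [hD, symmDiff_assoc, symmDiff_comm {a} B, ← symmDiff_assoc]
      have hABeq : symmDiff A B = B \ A := symmDiff_of_subset' hAB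
      have hup := chain_dist_le (D :: rest) D B hchain.2 rfl hlast'
      simp only [List.length_cons] at hup hlen
      -- a ∉ A, else contradiction
      have haA : a ∉ A := by
        intro haA
        have haBA : a ∉ B \ A := by simp [haA]
        have : symmDiff D B = insert a (B \ A) := by
          rw [hDB, hABeq, symmDiff_singleton_not_mem _ _ haBA]
        rw [this, Finset.card_insert_of_notMem haBA] at hup
        rw [hABeq] at hlen
        omega
      -- a ∈ B, else contradiction
      have haB : a ∈ B := by
        by_contra haB
        have haBA : a ∉ B \ A := by simp [haB]
        have : symmDiff D B = insert a (B \ A) := by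
          rw [hDB, hABeq, symmDiff_singleton_not_mem _ _ haBA]
        rw [this, Finset.card_insert_of_notMem haBA] at hup
        rw [hABeq] at hlen
        omega
      have hDins : D = insert a A := by
        rw [hD, symmDiff_singleton_not_mem _ _ haA]
      have haBA : a ∈ B \ A := Finset.mem_sdiff.2 ⟨haB, haA⟩
      have hDBcard : (symmDiff D B).card = (B \ A).card - 1 := by
        rw [hDB, hABeq, symmDiff_singleton_mem _ _ haBA,
          Finset.card_erase_of_mem haBA]
      have hDsub : D ⊆ B := by
        rw [hDins]; exact Finset.insert_subset haB hAB
      have hcardBA : 1 ≤ (B \ A).card := Finset.card_pos.2 ⟨a, haBA⟩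
      have hlen' : (D :: rest).length = (symmDiff D B).card + 1 := by
        simp only [List.length_cons, hDBcard]
        rw [hABeq] at hlen
        omega
      have htail := IH D B hDsub hchain.2 rfl hlast' hlen'
      simp only [List.Chain', List.isChain_cons_cons]
      refine ⟨⟨?_, ?_⟩, htail⟩
      · rw [hDins]; exact Finset.ssubset_insert haA
      · have : D \ A = {a} := by
          rw [hDins]; ext x
          by_cases hx : x = a <;> simp [hx, haA]
        rw [this, Finset.card_singleton]

/-- In a ∪-closed well-graded family, any `X ≠ Y` admit a tight path from `X` to
`X ∪ Y` which is a strictly increasing chain with one-element steps. -/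
theorem exists_increasing_tight_path (F : Finset (Finset α)) (hF : UnionClosed F)
    (hwg : WellGraded F) (X Y : Finset α) (hX : X ∈ F) (hY : Y ∈ F) (hne : X ≠ Y) :
    ∃ p : List (Finset α), IsTightPath F X (X ∪ Y) p ∧
      List.Chain' (fun A B => A ⊂ B ∧ (B \ A).card = 1) p := by
  by_cases hYX : Y ⊆ X
  · have hXY : X ∪ Y = X := Finset.union_eq_left.2 hYX
    refine ⟨[X], ⟨rfl, by simp [hXY], by simp [hXY, symmDiff_self], ?_, by simp [List.Chain']⟩, by simp [List.Chain']⟩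
    intro S hS
    simp at hS
    rwa [hS]
  · have hXYmem : X ∪ Y ∈ F := by
      have h := hF {X, Y} (by
        intro S hS
        simp only [Finset.mem_insert, Finset.mem_singleton] at hS
        rcases hS with rfl | rfl <;> assumption) ⟨X, by simp⟩
      simpa using h
    have hneq : X ≠ X ∪ Y := by
      intro h
      exact hYX (by rw [← Finset.union_eq_left, ← h])
    obtain ⟨p, hp⟩ := hwg X hX (X ∪ Y) hXYmem hneq
    refine ⟨p, hp, ?_⟩
    obtain ⟨hhead, hlast, hlen, _, hchain⟩ := hp
    exact tight_chain_increasing p X (X ∪ Y) Finset.subset_union_left hchain hhead hlast hlen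
end
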